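/- arXiv:0910.0056 — 6 statements merged into one kernel-verified Lean document; each statement's English description precedes it below -/
import Mathlib

section
/- Let f : X ⟶ Y be a morphism of schemes with étale envelope triple (E, e, i, j). Then e : E ⟶ Y is universally closed if and only if f is universally closed. -/
open AlgebraicGeometry CategoryTheory CategoryTheory.Limits

universe u

/-- A morphism of schemes is formally unramified if for every (affine) test scheme `Spec R`
and closed subscheme defined by a nilpotent ideal, `Y`-morphisms to `X` are determined by
their restriction to the closed subscheme. -/
def Scheme.Hom.FormallyUnramified {X Y : Scheme.{u}} (f : X ⟶ Y) : Prop :=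
  ∀ (R : CommRingCat.{u}) (I : Ideal R), IsNilpotent I →
    ∀ g₁ g₂ : Spec R ⟶ X, g₁ ≫ f = g₂ ≫ f →
      Spec.map (CommRingCat.ofHom (Ideal.Quotient.mk I)) ≫ g₁ =
        Spec.map (CommRingCat.ofHom (Ideal.Quotient.mk I)) ≫ g₂ →
      g₁ = g₂

/-- A morphism of schemes is unramified if it is locally of finite type and
formally unramified. -/
def Scheme.Hom.Unramified {X Y : Scheme.{u}} (f : X ⟶ Y) : Prop :=
  LocallyOfFiniteType f ∧ Scheme.Hom.FormallyUnramified f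

/-- A morphism of schemes is flat if all the induced maps on stalks are flat. -/
def Scheme.Hom.Flat' {X Y : Scheme.{u}} (f : X ⟶ Y) : Prop :=
  ∀ x : X, letI := RingHom.toAlgebra (f.stalkMap x).hom
    Module.Flat (Y.presheaf.stalk (f.base x)) (X.presheaf.stalk x)

/-- A morphism of schemes is étale if it is flat, unramified and locally of finite
presentation. -/
def Scheme.Hom.Etale {X Y : Scheme.{u}} (f : X ⟶ Y) : Prop :=
  Scheme.Hom.Flat' f ∧ Scheme.Hom.Unramified f ∧ LocallyOfFinitePresentation f

/-- An étale envelope triple for `f : X ⟶ Y`. -/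
structure IsEtaleEnvelope {X Y : Scheme.{u}} (f : X ⟶ Y) (E : Scheme.{u})
    (e : E ⟶ Y) (i : X ⟶ E) (j : Y ⟶ E) : Prop where
  etale : Scheme.Hom.Etale e
  closedImmersion : IsClosedImmersion i
  openImmersion : IsOpenImmersion j
  i_comp : i ≫ e = f
  j_comp : j ≫ e = 𝟙 Y
  range_i : Set.range i.base = (Set.range j.base)ᶜ

/-- For any pullback square of schemes, the range of one projection is the preimage of
the range of the parallel morphism. -/
lemma isPullback_range_fst {P X Y Z : Scheme.{u}} {fst : P ⟶ X} {snd : P ⟶ Y}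
    {f : X ⟶ Z} {g : Y ⟶ Z} (h : IsPullback fst snd f g) :
    Set.range fst.base = f.base ⁻¹' Set.range g.base := by
  have h1 : fst = h.isoPullback.hom ≫ pullback.fst f g := by simp
  have hsurj : Function.Surjective h.isoPullback.hom.base := fun t =>
    ⟨h.isoPullback.inv.base t, by
      rw [← Scheme.Hom.comp_apply, Iso.inv_hom_id]; rfl⟩
  rw [h1, Scheme.Hom.comp_base, TopCat.coe_comp, Set.range_comp,
    Set.range_eq_univ.mpr hsurj, Set.image_univ, Scheme.Pullback.range_fst]

/-- The étale envelope map is universally closed iff `f` is universally closed. -/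
theorem etaleEnvelope_universallyClosed_iff {X Y E : Scheme.{u}} (f : X ⟶ Y)
    (e : E ⟶ Y) (i : X ⟶ E) (j : Y ⟶ E) (h : IsEtaleEnvelope f E e i j) :
    UniversallyClosed e ↔ UniversallyClosed f := by
  haveI := h.closedImmersion
  constructor
  · intro he
    rw [← h.i_comp]
    infer_instance
  · intro hf
    constructor
    intro E' Y' i₁ i₂ e' sq
    -- base change of f
    set X' := pullback f i₂ with hX'
    set f' := pullback.snd f i₂ with hf'
    set pr := pullback.fst f i₂ with hpr
    have hpb : IsPullback pr f' f i₂ := IsPullback.of_hasPullback f i₂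
    -- the base change of i
    have hcomm : f' ≫ i₂ = (pr ≫ i) ≫ e := by
      rw [Category.assoc, h.i_comp, hpb.w]
    set i' : X' ⟶ E' := sq.lift f' (pr ≫ i) hcomm with hi'
    have hi'e' : i' ≫ e' = f' := sq.lift_fst _ _ _
    have hi'i₁ : i' ≫ i₁ = pr ≫ i := sq.lift_snd _ _ _
    have sqi : IsPullback i' pr i₁ i := by
      refine IsPullback.of_right ?_ hi'i₁ sq
      rw [hi'e', h.i_comp]
      exact hpb.flip
    -- the base change of j
    have hcomm2 : (𝟙 Y') ≫ i₂ = (i₂ ≫ j) ≫ e := by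
      rw [Category.assoc, h.j_comp, Category.comp_id, Category.id_comp]
    set j' : Y' ⟶ E' := sq.lift (𝟙 Y') (i₂ ≫ j) hcomm2 with hj'
    have hj'e' : j' ≫ e' = 𝟙 Y' := sq.lift_fst _ _ _
    have hj'i₁ : j' ≫ i₁ = i₂ ≫ j := sq.lift_snd _ _ _
    have sqj : IsPullback j' i₂ i₁ j := by
      refine IsPullback.of_right ?_ hj'i₁ sq
      rw [hj'e', h.j_comp]
      exact IsPullback.of_horiz_isIso ⟨by simp⟩
    -- ranges
    have rngi : Set.range i'.base = i₁.base ⁻¹' Set.range i.base := isPullback_range_fst sqi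
    have rngj : Set.range j'.base = i₁.base ⁻¹' Set.range j.base := isPullback_range_fst sqj
    have rng : Set.range i'.base = (Set.range j'.base)ᶜ := by
      rw [rngi, rngj, h.range_i, Set.preimage_compl]
    -- f' is a closed map
    haveI : UniversallyClosed f' := inferInstance
    have hf'closed : IsClosedMap f'.base := Scheme.Hom.isClosedMap f'
    -- conclusion
    show IsClosedMap e'.base
    intro Z hZ
    have key : e'.base '' Z = f'.base '' (i'.base ⁻¹' Z) ∪ j'.base ⁻¹' Z := by
      ext y
      constructor
      · rintro ⟨z, hz, rfl⟩
        by_cases hzj : z ∈ Set.range j'.base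
        · obtain ⟨y₀, rfl⟩ := hzj
          right
          have : e'.base (j'.base y₀) = y₀ := by
            rw [← Scheme.Hom.comp_apply, hj'e']; rfl
          rw [this]
          simpa [this] using hz
        · have : z ∈ Set.range i'.base := by rw [rng]; exact hzj
          obtain ⟨x, rfl⟩ := this
          left
          refine ⟨x, hz, ?_⟩
          rw [← Scheme.Hom.comp_apply, hi'e']
      · rintro (⟨x, hx, rfl⟩ | hy)
        · exact ⟨i'.base x, hx, by rw [← Scheme.Hom.comp_apply, hi'e']⟩
        · refine ⟨j'.base y, hy, ?_⟩
          rw [← Scheme.Hom.comp_apply, hj'e']; rfl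
    rw [key]
    exact (hf'closed _ (IsClosed.preimage i'.continuous hZ)).union
      (IsClosed.preimage j'.continuous hZ)
end

section
/- Let f : X ⟶ Y be a morphism of schemes with étale envelope triple (E, e, i, j). Then e : E ⟶ Y is quasi-compact if and only if f is quasi-compact. -/
open AlgebraicGeometry CategoryTheory CategoryTheory.Limits

universe u

/-- The étale envelope map is quasi-compact iff `f` is quasi-compact. -/
theorem etaleEnvelope_quasiCompact_iff {X Y E : Scheme.{u}} (f : X ⟶ Y)
    (e : E ⟶ Y) (i : X ⟶ E) (j : Y ⟶ E) (h : IsEtaleEnvelope f E e i j) :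
    QuasiCompact e ↔ QuasiCompact f := by
  constructor
  · intro he
    have : QuasiCompact (i ≫ e) := by
      haveI : IsClosedImmersion i := h.closedImmersion
      infer_instance
    rwa [h.i_comp] at this
  · intro hf
    constructor
    intro U hU hUc
    have key : e.base ⁻¹' U = i.base '' (f.base ⁻¹' U) ∪ j.base '' U := by
      ext p
      constructor
      · intro hp
        by_cases hpj : p ∈ Set.range j.base
        · obtain ⟨y, rfl⟩ := hpj
          right
          refine ⟨y, ?_, rfl⟩
          have : e.base (j.base y) = y := by
            have := congrArg (fun g : Y ⟶ Y => g.base y) h.j_comp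
            simpa using this
          rwa [Set.mem_preimage, this] at hp
        · have hpi : p ∈ Set.range i.base := by rw [h.range_i]; exact hpj
          obtain ⟨x, rfl⟩ := hpi
          left
          refine ⟨x, ?_, rfl⟩
          have : e.base (i.base x) = f.base x := by
            have := congrArg (fun g : X ⟶ Y => g.base x) h.i_comp
            simpa using this
          rwa [Set.mem_preimage, this] at hp
      · intro hp
        rcases hp with ⟨x, hx, rfl⟩ | ⟨y, hy, rfl⟩
        · have : e.base (i.base x) = f.base x := by
            have := congrArg (fun g : X ⟶ Y => g.base x) h.i_comp
            simpa using this
          simpa [Set.mem_preimage, this] using hx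
        · have : e.base (j.base y) = y := by
            have := congrArg (fun g : Y ⟶ Y => g.base y) h.j_comp
            simpa using this
          simpa [Set.mem_preimage, this] using hy
    rw [key]
    exact ((hf.isCompact_preimage U hU hUc).image i.base.hom.continuous).union
      (hUc.image j.base.hom.continuous)
end

section
/- Let f : X ⟶ Y be an immersion of schemes (an isomorphism onto a locally closed subscheme of Y). Then there exists an étale envelope triple (E, e, i, j) for f with E a scheme. (Concretely, E is obtained by gluing Y and the open subscheme U = Y ∖ (closure(f(X)) ∖ f(X)) along the open subset U ∖ f(X) = Y ∖ closure(f(X)).) -/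
open AlgebraicGeometry CategoryTheory CategoryTheory.Limits

universe u

namespace EtaleEnvelopeAux

lemma bool3 {i j k : ULift.{u} Bool} (hij : i ≠ j) (hik : i ≠ k) (hjk : j ≠ k) : False := by
  rcases i with ⟨(_ | _)⟩ <;> rcases j with ⟨(_ | _)⟩ <;> rcases k with ⟨(_ | _)⟩ <;> simp_all

lemma hFT : (⟨false⟩ : ULift.{u} Bool) ≠ ⟨true⟩ := fun h => by
  exact Bool.noConfusion (congrArg ULift.down h)

lemma hTF : (⟨true⟩ : ULift.{u} Bool) ≠ ⟨false⟩ := fun h => by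
  exact Bool.noConfusion (congrArg ULift.down h)

variable {X Y : Scheme.{u}} (f : X ⟶ Y) [IsImmersion f]

/-- The open complement of the closure of the range of `f`. -/
noncomputable def Wo : Y.Opens :=
  ⟨(closure (Set.range f.base))ᶜ, isClosed_closure.isOpen_compl⟩

lemma Wo_le : Wo f ≤ f.coborderRange := fun x hx => by
  show x ∈ coborder (Set.range f.base)
  rw [coborder_eq_union_closure_compl]
  exact Or.inr hx

/-- The two-piece gluing data: `Y` and the coborder open, glued along `Wo`. -/
noncomputable def glueD : CategoryTheory.GlueData' Scheme.{u} where
  J := ULift.{u} Bool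
  U b := match b with
    | ⟨false⟩ => Y
    | ⟨true⟩ => (f.coborderRange : Scheme.{u})
  V _ _ _ := (Wo f : Scheme.{u})
  f i _ _ := match i with
    | ⟨false⟩ => (Wo f).ι
    | ⟨true⟩ => Y.homOfLE (Wo_le f)
  f_mono i j h := by rcases i with ⟨(_ | _)⟩ <;> dsimp <;> infer_instance
  f_hasPullback _ _ _ _ _ := inferInstance
  t _ _ _ := 𝟙 _
  t' i j k hij hik hjk := (bool3 hij hik hjk).elim
  t_fac i j k hij hik hjk := (bool3 hij hik hjk).elim
  t_inv _ _ _ := Category.comp_id _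
  cocycle i j k hij hik hjk := (bool3 hij hik hjk).elim

noncomputable def glueData : Scheme.GlueData.{u} where
  toGlueData := CategoryTheory.GlueData.ofGlueData' (glueD f)
  f_open i j := by
    show IsOpenImmersion ((glueD f).f' i j)
    dsimp only [CategoryTheory.GlueData'.f']
    split_ifs with h
    · infer_instance
    · have : IsOpenImmersion ((glueD f).f i j h) := by
        rcases i with ⟨(_ | _)⟩ <;> dsimp [glueD] <;> infer_instance
      infer_instance


/-- The glued scheme. -/
noncomputable abbrev Etot : Scheme.{u} := (glueData f).glued

/-- The open immersion of `Y` into the glued scheme. -/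
noncomputable def ιF : Y ⟶ Etot f := (glueData f).ι ⟨false⟩

/-- The open immersion of the coborder open into the glued scheme. -/
noncomputable def ιT : (f.coborderRange : Scheme.{u}) ⟶ Etot f := (glueData f).ι ⟨true⟩

/-- The pieces of the structure morphism to `Y`. -/
noncomputable def phi : ∀ b : ULift.{u} Bool, (glueD f).U b ⟶ Y := fun b =>
  match b with
  | ⟨false⟩ => 𝟙 Y
  | ⟨true⟩ => f.coborderRange.ι

lemma hFT' : @Ne (glueD f).J ⟨false⟩ ⟨true⟩ := hFT

lemma hTF' : @Ne (glueD f).J ⟨true⟩ ⟨false⟩ := hTF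

lemma desc_compat : ∀ a : (MultispanShape.prod (glueData f).J).L,
    ((glueData f).toGlueData.diagram).fst a ≫ phi f ((MultispanShape.prod (glueData f).J).fst a) =
    ((glueData f).toGlueData.diagram).snd a ≫ phi f ((MultispanShape.prod (glueData f).J).snd a) := by
  rintro ⟨i, j⟩
  show (glueData f).f i j ≫ phi f i = ((glueData f).t i j ≫ (glueData f).f j i) ≫ phi f j
  rcases i with ⟨(_ | _)⟩ <;> rcases j with ⟨(_ | _)⟩ <;>
    simp only [glueData, CategoryTheory.GlueData.ofGlueData', CategoryTheory.GlueData'.f',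
      dif_pos rfl, dif_neg (hFT' f), dif_neg (hTF' f)] <;>
    dsimp only [glueD, phi] <;>
    simp [Scheme.homOfLE_ι] <;> simp -failIfUnchanged only [← Category.assoc] <;>
    erw [eqToHom_trans] <;> erw [eqToHom_trans]

/-- The structure morphism of the glued scheme. -/
noncomputable def emap : Etot f ⟶ Y :=
  Multicoequalizer.desc (glueData f).toGlueData.diagram Y (phi f) (desc_compat f)

lemma he_F : (glueData f).ι ⟨false⟩ ≫ emap f = 𝟙 Y :=
  Multicoequalizer.π_desc (glueData f).toGlueData.diagram Y (phi f) (desc_compat f) ⟨false⟩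

lemma he_T : (glueData f).ι ⟨true⟩ ≫ emap f = f.coborderRange.ι :=
  Multicoequalizer.π_desc (glueData f).toGlueData.diagram Y (phi f) (desc_compat f) ⟨true⟩

lemma fFT_eq : ∃ (w : (glueData f).V (⟨false⟩, ⟨true⟩) ≅ (Wo f : Scheme.{u})),
    (glueData f).f ⟨false⟩ ⟨true⟩ = w.hom ≫ (Wo f).ι := by
  refine ⟨eqToIso (dif_neg hFT), ?_⟩
  show (glueD f).f' ⟨false⟩ ⟨true⟩ = _
  simp only [CategoryTheory.GlueData'.f', dif_neg (hFT' f), eqToIso.hom]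
  rfl

lemma range_fFT : Set.range ((glueData f).f ⟨false⟩ ⟨true⟩).base = (Wo f : Set Y) := by
  obtain ⟨w, hw⟩ := fFT_eq f
  have hsurj : Function.Surjective (w.hom.base) := fun y => ⟨w.inv.base y, by
    have h2 := congrArg (fun (m : (Wo f : Scheme.{u}) ⟶ (Wo f : Scheme.{u})) => m.base y) w.inv_hom_id
    simpa using h2⟩
  rw [hw, Scheme.Hom.comp_base]
  erw [TopCat.coe_comp]
  rw [Set.range_comp,
    Set.range_eq_univ.mpr hsurj, Set.image_univ]
  erw [Scheme.Opens.range_ι]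

lemma key_FT : (glueData f).t ⟨false⟩ ⟨true⟩ ≫ (glueData f).f ⟨true⟩ ⟨false⟩ ≫ f.coborderRange.ι =
    (glueData f).f ⟨false⟩ ⟨true⟩ := by
  have h := congrArg (· ≫ emap f) ((glueData f).glue_condition ⟨false⟩ ⟨true⟩)
  simp only [Category.assoc] at h
  erw [he_T f, he_F f, Category.comp_id] at h
  exact h

lemma key_TF : (glueData f).f ⟨true⟩ ⟨false⟩ ≫ f.coborderRange.ι =
    (glueData f).t ⟨true⟩ ⟨false⟩ ≫ (glueData f).f ⟨false⟩ ⟨true⟩ := by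
  have h := congrArg (· ≫ emap f) ((glueData f).glue_condition ⟨true⟩ ⟨false⟩)
  simp only [Category.assoc] at h
  erw [he_T f, he_F f, Category.comp_id] at h
  exact h.symm

lemma i_comp_eq : f.liftCoborder ≫ (glueData f).ι ⟨true⟩ ≫ emap f = f := by
  erw [he_T f, Scheme.Hom.liftCoborder_ι]


lemma ιF_eq : (glueData f).ι ⟨false⟩ = ((glueData f).ι ⟨false⟩ : Y ⟶ (glueData f).glued) := rfl

lemma flat_aux {R S : CommRingCat.{u}} (φ : R ⟶ S) [IsIso φ] :
    letI := RingHom.toAlgebra φ.hom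
    Module.Flat R S := by
  letI := RingHom.toAlgebra φ.hom
  let e : R ≃+* S := (asIso φ).commRingCatIsoToRingEquiv
  let l : S ≃ₗ[R] R :=
    { e.symm with
      map_smul' := fun r x => by
        show e.symm (r • x) = r • e.symm x
        rw [Algebra.smul_def, RingHom.algebraMap_toAlgebra, map_mul, smul_eq_mul]
        congr 1
        exact e.symm_apply_apply r }
  exact Module.Flat.of_linearEquiv l

lemma hob (b : ULift.{u} Bool) : IsOpenImmersion ((glueData f).ι b ≫ emap f) := by
  rcases b with ⟨(_ | _)⟩
  · rw [he_F f]; exact inferInstanceAs (IsOpenImmersion (𝟙 Y))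
  · rw [he_T f]; exact inferInstanceAs (IsOpenImmersion (f.coborderRange.ι))

lemma emap_stalkMap_isIso (z : (glueData f).glued) : IsIso ((emap f).stalkMap z) := by
  obtain ⟨b, y, rfl⟩ := (glueData f).ι_jointly_surjective z
  haveI := hob f b
  have h := Scheme.Hom.stalkMap_comp ((glueData f).ι b) (emap f) y
  haveI : IsIso ((emap f).stalkMap (((glueData f).ι b).base y) ≫
      ((glueData f).ι b).stalkMap y) := by
    rw [← h]; exact inferInstanceAs (IsIso (((glueData f).ι b ≫ emap f).stalkMap y))
  exact IsIso.of_isIso_comp_right ((emap f).stalkMap (((glueData f).ι b).base y))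
    (((glueData f).ι b).stalkMap y)

lemma emap_lft : LocallyOfFiniteType (emap f) := by
  haveI : IsZariskiLocalAtSource @LocallyOfFiniteType :=
    HasRingHomProperty.instIsZariskiLocalAtSource (Q := @RingHom.FiniteType)
  refine IsZariskiLocalAtSource.of_openCover (glueData f).openCover (fun b => ?_)
  erw [Scheme.GlueData.openCover_f]
  rcases b with ⟨(_ | _)⟩
  · erw [he_F f]; exact inferInstanceAs (LocallyOfFiniteType (𝟙 Y))
  · erw [he_T f]; exact inferInstanceAs (LocallyOfFiniteType (f.coborderRange.ι))

lemma emap_lfp : LocallyOfFinitePresentation (emap f) := by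
  haveI : IsZariskiLocalAtSource @LocallyOfFinitePresentation :=
    HasRingHomProperty.instIsZariskiLocalAtSource (Q := @RingHom.FinitePresentation)
  refine IsZariskiLocalAtSource.of_openCover (glueData f).openCover (fun b => ?_)
  erw [Scheme.GlueData.openCover_f]
  rcases b with ⟨(_ | _)⟩
  · erw [he_F f]; exact inferInstanceAs (LocallyOfFinitePresentation (𝟙 Y))
  · erw [he_T f]; exact inferInstanceAs (LocallyOfFinitePresentation (f.coborderRange.ι))

lemma mono_ie (b : ULift.{u} Bool) : Mono ((glueData f).ι b ≫ emap f) := by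
  rcases b with ⟨(_ | _)⟩
  · rw [he_F f]; exact inferInstanceAs (Mono (𝟙 Y))
  · rw [he_T f]; exact inferInstanceAs (Mono (f.coborderRange.ι))

lemma emap_unramified : ∀ (R : CommRingCat.{u}) (I : Ideal R), IsNilpotent I →
    ∀ g₁ g₂ : Spec R ⟶ (glueData f).glued, g₁ ≫ emap f = g₂ ≫ emap f →
      Spec.map (CommRingCat.ofHom (Ideal.Quotient.mk I)) ≫ g₁ =
        Spec.map (CommRingCat.ofHom (Ideal.Quotient.mk I)) ≫ g₂ →
      g₁ = g₂ := by
  intro R I hI g₁ g₂ hcomp hquot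
  have hsurj : Function.Surjective
      (Spec.map (CommRingCat.ofHom (Ideal.Quotient.mk I))).base := by
    intro x
    have hx : x ∈ PrimeSpectrum.zeroLocus (I : Set R) := by
      erw [PrimeSpectrum.mem_zeroLocus]
      intro a ha
      obtain ⟨n, hn⟩ := hI
      have h1 : a ^ n ∈ I ^ n := Ideal.pow_mem_pow ha n
      rw [hn] at h1
      have ha0 : a ^ n = 0 := by simpa [Ideal.zero_eq_bot, Ideal.mem_bot] using h1
      exact x.2.mem_of_pow_mem n (ha0 ▸ x.asIdeal.zero_mem)
    have h2 := range_comap_of_surjective _ (Ideal.Quotient.mk I)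
      Ideal.Quotient.mk_surjective
    rw [Ideal.mk_ker] at h2
    rw [← h2] at hx
    exact hx
  have hbase : ∀ x, g₁.base x = g₂.base x := fun x => by
    obtain ⟨x', rfl⟩ := hsurj x
    have h3 : (Spec.map (CommRingCat.ofHom (Ideal.Quotient.mk I)) ≫ g₁).base x' =
        (Spec.map (CommRingCat.ofHom (Ideal.Quotient.mk I)) ≫ g₂).base x' := by rw [hquot]
    simpa [Scheme.Hom.comp_apply] using h3
  let O : (glueData f).J → (Spec R).Opens := fun b => g₁ ⁻¹ᵁ ((glueData f).ι b).opensRange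
  have hO : ∀ x : ↑(Spec R), ∃ b, x ∈ O b := fun x => by
    obtain ⟨b, y, hy⟩ := (glueData f).ι_jointly_surjective (g₁.base x)
    exact ⟨b, ⟨y, hy⟩⟩
  let 𝒰 : (Spec R).OpenCover :=
    Scheme.Cover.mkOfCovers (glueData f).J (fun b => (O b : Scheme.{u})) (fun b => (O b).ι)
      (fun x => ⟨(hO x).choose, ⟨x, (hO x).choose_spec⟩, rfl⟩)
  apply Scheme.Cover.hom_ext 𝒰
  rintro (b : (glueData f).J)
  show (O b).ι ≫ g₁ = (O b).ι ≫ g₂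
  have hr₁ : Set.range ((O b).ι ≫ g₁).base ⊆ Set.range ((glueData f).ι b).base := by
    rintro _ ⟨t, rfl⟩
    have ht : (O b).ι.base t ∈ O b := by
      have h4 : (O b).ι.base t ∈ Set.range (O b).ι.base := ⟨t, rfl⟩
      rwa [Scheme.Opens.range_ι] at h4
    rw [Scheme.Hom.comp_apply]
    exact ht
  have hr₂ : Set.range ((O b).ι ≫ g₂).base ⊆ Set.range ((glueData f).ι b).base := by
    rintro _ ⟨t, rfl⟩
    rw [Scheme.Hom.comp_apply, ← hbase]
    exact hr₁ ⟨t, by rw [Scheme.Hom.comp_apply]⟩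
  have hl₁ : IsOpenImmersion.lift ((glueData f).ι b) _ hr₁ ≫ (glueData f).ι b =
      (O b).ι ≫ g₁ := IsOpenImmersion.lift_fac _ _ hr₁
  have hl₂ : IsOpenImmersion.lift ((glueData f).ι b) _ hr₂ ≫ (glueData f).ι b =
      (O b).ι ≫ g₂ := IsOpenImmersion.lift_fac _ _ hr₂
  haveI hmono : Mono ((glueData f).ι b ≫ emap f) := mono_ie f b
  have hl : IsOpenImmersion.lift ((glueData f).ι b) _ hr₁ =
      IsOpenImmersion.lift ((glueData f).ι b) _ hr₂ := by
    rw [← cancel_mono ((glueData f).ι b ≫ emap f)]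
    rw [← Category.assoc, ← Category.assoc, hl₁, hl₂, Category.assoc, Category.assoc, hcomp]
  rw [← hl₁, ← hl₂, hl]

lemma mem_Wo (y : Y) : y ∈ (Wo f : Set Y) ↔ y ∉ closure (Set.range f.base) := Iff.rfl

lemma key_pt (v : (glueData f).V (⟨false⟩, ⟨true⟩)) :
    f.coborderRange.ι.base (((glueData f).t ⟨false⟩ ⟨true⟩ ≫
      (glueData f).f ⟨true⟩ ⟨false⟩).base v) = ((glueData f).f ⟨false⟩ ⟨true⟩).base v := by
  have h4 := congrArg (fun q : (glueData f).V (⟨false⟩, ⟨true⟩) ⟶ Y => q.base v) (key_FT f)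
  dsimp only at h4
  simp only [Scheme.Hom.comp_apply] at h4 ⊢
  exact h4

lemma range_eq : Set.range ((f.liftCoborder ≫ (glueData f).ι ⟨true⟩).base) =
    (Set.range ((glueData f).ι ⟨false⟩).base)ᶜ := by
  ext z
  constructor
  · rintro ⟨x, rfl⟩ ⟨y, hy⟩
    erw [Scheme.Hom.comp_apply] at hy
    have hy' := ((glueData f).ι_eq_iff ⟨false⟩ ⟨true⟩ y (f.liftCoborder.base x)).mp hy
    rcases hy' with ⟨v, hv1, hv2⟩
    · dsimp only at hv1 hv2
      have hfx : f.base x = f.coborderRange.ι.base (f.liftCoborder.base x) := by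
        rw [← Scheme.Hom.comp_apply, Scheme.Hom.liftCoborder_ι]
      have h3 : f.base x ∈ (Wo f : Set Y) := by
        rw [hfx, ← hv2, key_pt f v, ← range_fFT f]
        exact ⟨v, rfl⟩
      exact (mem_Wo f _).mp h3 (subset_closure ⟨x, rfl⟩)
  · intro hz
    obtain ⟨b, u, rfl⟩ := (glueData f).ι_jointly_surjective z
    rcases b with ⟨(_ | _)⟩
    · exact absurd ⟨u, rfl⟩ hz
    · have hinj := f.coborderRange.ι.isEmbedding.injective
      have hmem : f.coborderRange.ι.base u ∈ Set.range f.base := by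
        by_contra hnot
        have hWo : f.coborderRange.ι.base u ∈ (Wo f : Set Y) := by
          have hcob : f.coborderRange.ι.base u ∈ coborder (Set.range f.base) := by
            have h5 : f.coborderRange.ι.base u ∈ Set.range f.coborderRange.ι.base := ⟨u, rfl⟩
            rwa [Scheme.Opens.range_ι] at h5
          rw [coborder_eq_union_closure_compl] at hcob
          rcases hcob with h | h
          · exact absurd h hnot
          · exact h
        have hv' : f.coborderRange.ι.base u ∈
            Set.range ((glueData f).f ⟨false⟩ ⟨true⟩).base := by
          rw [range_fFT f]; exact hWo
        obtain ⟨v, hv⟩ := hv'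
        have huv : (((glueData f).t ⟨false⟩ ⟨true⟩ ≫ (glueData f).f ⟨true⟩ ⟨false⟩)).base v
            = u := by
          apply hinj
          rw [key_pt f v, hv]
        have hmem2 : ((glueData f).ι ⟨false⟩).base (((glueData f).f ⟨false⟩ ⟨true⟩).base v) =
            ((glueData f).ι ⟨true⟩).base u :=
          ((glueData f).ι_eq_iff ⟨false⟩ ⟨true⟩ _ _).mpr ⟨v, rfl, huv⟩
        exact hz ⟨_, hmem2⟩
      obtain ⟨x, hx⟩ := hmem
      have hlu : f.liftCoborder.base x = u := by
        apply hinj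
        rw [← Scheme.Hom.comp_apply, Scheme.Hom.liftCoborder_ι]
        exact hx
      exact ⟨x, by erw [Scheme.Hom.comp_apply, hlu]; rfl⟩

lemma i_closed : IsClosedImmersion (f.liftCoborder ≫ (glueData f).ι ⟨true⟩) := by
  haveI : IsOpenImmersion ((glueData f).ι ⟨true⟩) := (glueData f).ι_isOpenImmersion ⟨true⟩
  haveI : IsOpenImmersion ((glueData f).ι ⟨false⟩) := (glueData f).ι_isOpenImmersion ⟨false⟩
  haveI h1 : IsImmersion (f.liftCoborder ≫ (glueData f).ι ⟨true⟩) :=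
    @IsImmersion.comp _ _ _ _ _ inferInstance
      (@IsImmersion.instOfIsOpenImmersion _ _ _ ((glueData f).ι_isOpenImmersion ⟨true⟩))
  refine IsClosedImmersion.of_isPreimmersion _ ?_
  rw [range_eq f]
  exact ((glueData f).ι ⟨false⟩).isOpenEmbedding.isOpen_range.isClosed_compl

lemma emap_flat : Scheme.Hom.Flat' (emap f) := fun z => by
  haveI := emap_stalkMap_isIso f z
  exact flat_aux ((emap f).stalkMap z)

end EtaleEnvelopeAux


open EtaleEnvelopeAux in
/-- An immersion of schemes admits an étale envelope. -/
theorem etaleEnvelope_exists_of_isImmersion {X Y : Scheme.{u}} (f : X ⟶ Y)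
    [IsImmersion f] :
    ∃ (E : Scheme.{u}) (e : E ⟶ Y) (i : X ⟶ E) (j : Y ⟶ E),
      IsEtaleEnvelope f E e i j := by
  refine ⟨(glueData f).glued, emap f, f.liftCoborder ≫ (glueData f).ι ⟨true⟩,
    (glueData f).ι ⟨false⟩, ?_⟩
  exact
    { etale := ⟨emap_flat f, ⟨emap_lft f, emap_unramified f⟩, emap_lfp f⟩
      closedImmersion := i_closed f
      openImmersion := (glueData f).ι_isOpenImmersion ⟨false⟩
      i_comp := by erw [Category.assoc]; exact i_comp_eq f
      j_comp := he_F f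
      range_i := range_eq f }
end

section
/- Let R be a commutative ring and A a commutative R-algebra. Regard A as an algebra over A ⊗[R] A via the multiplication map A ⊗[R] A ⟶ A, a ⊗ b ↦ ab. Then A is formally unramified over R if and only if A is formally étale over A ⊗[R] A. -/
open TensorProduct

universe u

section Aux

variable {B : Type u} [CommRing B] (J : Ideal B)

lemma algHom_quotient_subsingleton_aux {C : Type*} [CommRing C] [Algebra B C] :
    Subsingleton ((B ⧸ J) →ₐ[B] C) := by
  constructor
  intro φ ψ
  ext x
  obtain ⟨x, rfl⟩ := Ideal.Quotient.mk_surjective x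
  show φ (algebraMap B (B ⧸ J) x) = ψ (algebraMap B (B ⧸ J) x)
  rw [AlgHom.commutes, AlgHom.commutes]

lemma formallyEtale_quotient_of_idempotent_aux (h : IsIdempotentElem J) :
    Algebra.FormallyEtale B (B ⧸ J) := by
  rw [Algebra.FormallyEtale.iff_comp_bijective]
  intro C _ _ I hI
  constructor
  · intro f g _
    exact Subsingleton.elim (h := algHom_quotient_subsingleton_aux J) f g
  · intro g
    have h1 : J.map (algebraMap B C) ≤ I := by
      rw [Ideal.map_le_iff_le_comap]
      intro x hx
      have hgx : g (Ideal.Quotient.mk J x) = algebraMap B (C ⧸ I) x := by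
        show g (algebraMap B (B ⧸ J) x) = _
        rw [AlgHom.commutes]
      have hz : g (Ideal.Quotient.mk J x) = 0 := by
        rw [Ideal.Quotient.eq_zero_iff_mem.mpr hx, map_zero]
      rw [hz] at hgx
      have : Ideal.Quotient.mk I (algebraMap B C x) = 0 := by
        rw [IsScalarTower.algebraMap_apply B C (C ⧸ I)] at hgx
        rw [← Ideal.Quotient.algebraMap_eq, ← hgx]
      exact Ideal.mem_comap.mpr (Ideal.Quotient.eq_zero_iff_mem.mp this)
    have hbot : J.map (algebraMap B C) = ⊥ := by
      have h2 : J.map (algebraMap B C) ≤ ⊥ := by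
        conv_lhs => rw [← h, Ideal.map_mul]
        calc J.map (algebraMap B C) * J.map (algebraMap B C) ≤ I * I :=
              Ideal.mul_mono h1 h1
          _ = I ^ 2 := (pow_two I).symm
          _ = ⊥ := hI
      exact le_bot_iff.mp h2
    have hker : ∀ x ∈ J, (Algebra.ofId B C) x = 0 := by
      intro x hx
      have : algebraMap B C x ∈ J.map (algebraMap B C) := Ideal.mem_map_of_mem _ hx
      rw [hbot] at this
      simpa [Algebra.ofId_apply] using this
    exact ⟨Ideal.Quotient.liftₐ J (Algebra.ofId B C) hker,
      Subsingleton.elim (h := algHom_quotient_subsingleton_aux J) _ g⟩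

lemma idempotent_of_formallyEtale_aux (h : Algebra.FormallyEtale B (B ⧸ J)) :
    IsIdempotentElem J := by
  have hle : J ≤ J ^ 2 := by
    set I : Ideal (B ⧸ J ^ 2) := J.map (Ideal.Quotient.mk (J ^ 2)) with hIdef
    have hI : I ^ 2 = ⊥ := by
      rw [hIdef, ← Ideal.map_pow, Ideal.map_quotient_self]
    have hg : ∀ x ∈ J, (Algebra.ofId B ((B ⧸ J ^ 2) ⧸ I)) x = 0 := by
      intro x hx
      show algebraMap B ((B ⧸ J ^ 2) ⧸ I) x = 0
      rw [IsScalarTower.algebraMap_apply B (B ⧸ J ^ 2) ((B ⧸ J ^ 2) ⧸ I),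
        Ideal.Quotient.algebraMap_eq, Ideal.Quotient.algebraMap_eq]
      exact Ideal.Quotient.eq_zero_iff_mem.mpr (Ideal.mem_map_of_mem _ hx)
    obtain ⟨f, -⟩ := (Algebra.FormallyEtale.iff_comp_bijective.mp h I hI).2 (Ideal.Quotient.liftₐ J (Algebra.ofId _ _) hg)
    intro x hx
    have hfx : f (algebraMap B (B ⧸ J) x) = algebraMap B (B ⧸ J ^ 2) x := f.commutes x
    have : algebraMap B (B ⧸ J) x = 0 := by
      rw [Ideal.Quotient.algebraMap_eq]
      exact Ideal.Quotient.eq_zero_iff_mem.mpr hx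
    rw [this, map_zero] at hfx
    rw [Ideal.Quotient.algebraMap_eq] at hfx
    exact Ideal.Quotient.eq_zero_iff_mem.mp hfx.symm
  show J * J = J
  exact le_antisymm Ideal.mul_le_left (by rw [← pow_two]; exact hle)

end Aux

/-- `A` is formally unramified over `R` iff `A` is formally étale over `A ⊗[R] A`, where
`A` is an `A ⊗[R] A`-algebra via the multiplication map `a ⊗ b ↦ a * b`. -/
theorem formallyUnramified_iff_formallyEtale_over_tensorProduct
    (R A : Type u) [CommRing R] [CommRing A] [Algebra R A] :
    letI : Algebra (A ⊗[R] A) A :=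
      (Algebra.TensorProduct.lmul' R (S := A)).toRingHom.toAlgebra
    Algebra.FormallyUnramified R A ↔ Algebra.FormallyEtale (A ⊗[R] A) A := by
  letI : Algebra (A ⊗[R] A) A :=
    (Algebra.TensorProduct.lmul' R (S := A)).toRingHom.toAlgebra
  show Algebra.FormallyUnramified R A ↔ Algebra.FormallyEtale (A ⊗[R] A) A
  set J : Ideal (A ⊗[R] A) := KaehlerDifferential.ideal R A with hJ
  have hsurj : Function.Surjective (Algebra.ofId (A ⊗[R] A) A) := fun a =>
    ⟨a ⊗ₜ 1, by simp [Algebra.ofId_apply, RingHom.algebraMap_toAlgebra]⟩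
  have hker : RingHom.ker (Algebra.ofId (A ⊗[R] A) A) = J := rfl
  have e : ((A ⊗[R] A) ⧸ J) ≃ₐ[A ⊗[R] A] A :=
    hker ▸ Ideal.quotientKerAlgEquivOfSurjective hsurj
  rw [← Algebra.FormallyEtale.iff_of_equiv e, Algebra.formallyUnramified_iff]
  have hcot : Subsingleton (Ω[A⁄R]) ↔ IsIdempotentElem J :=
    Ideal.cotangent_subsingleton_iff J
  rw [hcot]
  exact ⟨formallyEtale_quotient_of_idempotent_aux J, idempotent_of_formallyEtale_aux J⟩
end

section
/- Let f : X ⟶ Y be a morphism of schemes with étale envelope triple (E, e, i, j). If f is of finite presentation (quasi-compact, quasi-separated and locally of finite presentation), then e : E ⟶ Y is of finite presentation. -/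
open AlgebraicGeometry CategoryTheory CategoryTheory.Limits

universe u

section Aux

instance EtaleEnvelopeAux.qsAff :
    HasAffineProperty.{u} @QuasiSeparated (fun X _ _ _ ↦ QuasiSeparatedSpace X) :=
  instHasAffinePropertyQuasiSeparatedQuasiSeparatedSpaceCarrierCarrierCommRingCat
instance EtaleEnvelopeAux.qsLocal : IsZariskiLocalAtTarget.{u} @QuasiSeparated :=
  @HasAffineProperty.instIsZariskiLocalAtTarget _ _
    instHasAffinePropertyQuasiSeparatedQuasiSeparatedSpaceCarrierCarrierCommRingCat
instance EtaleEnvelopeAux.lfpLocalT : IsZariskiLocalAtTarget.{u} @LocallyOfFinitePresentation :=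
  @HasRingHomProperty.instIsZariskiLocalAtTarget _ _
    instHasRingHomPropertyLocallyOfFinitePresentationFinitePresentation
instance EtaleEnvelopeAux.lftLocalT : IsZariskiLocalAtTarget.{u} @LocallyOfFiniteType :=
  @HasRingHomProperty.instIsZariskiLocalAtTarget _ _
    instHasRingHomPropertyLocallyOfFiniteTypeFiniteType
instance EtaleEnvelopeAux.lfpLocalS : IsZariskiLocalAtSource.{u} @LocallyOfFinitePresentation :=
  @HasRingHomProperty.instIsZariskiLocalAtSource _ _
    instHasRingHomPropertyLocallyOfFinitePresentationFinitePresentation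

/-- The kernel of a surjective finitely presented ring hom is finitely generated. -/
theorem EtaleEnvelopeAux.ker_fg_of_fp {R S : Type u} [CommRing R] [CommRing S] (φ : R →+* S)
    (h : φ.FinitePresentation) (hs : Function.Surjective φ) : (RingHom.ker φ).FG := by
  letI := φ.toAlgebra
  haveI : Algebra.FinitePresentation R S := h
  exact Algebra.FinitePresentation.ker_fG_of_surjective (Algebra.ofId R S) hs

/-- Locally of finite presentation implies locally of finite type. -/
theorem EtaleEnvelopeAux.lft_of_lfp {X Y : Scheme.{u}} (f : X ⟶ Y)
    [LocallyOfFinitePresentation f] : LocallyOfFiniteType f :=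
  ⟨fun {_} U {_} V e => RingHom.FiniteType.of_finitePresentation
    (LocallyOfFinitePresentation.finitePresentation_appLE f U V e)⟩

/-- Cancellation: if `f ≫ g` is locally of finite presentation and `g` is locally of finite
type, then `f` is locally of finite presentation. -/
theorem EtaleEnvelopeAux.lfp_of_comp {X Y Z : Scheme.{u}} (f : X ⟶ Y) (g : Y ⟶ Z)
    (h : LocallyOfFinitePresentation (f ≫ g)) (hg : LocallyOfFiniteType g) :
    LocallyOfFinitePresentation f := by
  wlog hZ : IsAffine Z generalizing X Y Z
  · rw [IsZariskiLocalAtTarget.iff_of_iSup_eq_top (P := @LocallyOfFinitePresentation) _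
      (show ⨆ U : Z.affineOpens, g ⁻¹ᵁ U.1 = ⊤ by
        rw [← Scheme.Hom.preimage_iSup (U := fun U : Z.affineOpens => U.1),
          iSup_affineOpens_eq_top Z, Scheme.Hom.preimage_top])]
    intro U
    have H := IsZariskiLocalAtTarget.restrict h U.1
    rw [morphismRestrict_comp] at H
    exact this _ _ H (IsZariskiLocalAtTarget.restrict hg U.1) U.2
  wlog hY : IsAffine Y generalizing X Y
  · rw [IsZariskiLocalAtTarget.iff_of_iSup_eq_top (P := @LocallyOfFinitePresentation) _
      (iSup_affineOpens_eq_top Y)]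
    intro U
    have H := MorphismProperty.comp_mem @LocallyOfFinitePresentation
      (f ⁻¹ᵁ U.1).ι (f ≫ g) inferInstance h
    rw [← morphismRestrict_ι_assoc] at H
    have hg' := MorphismProperty.comp_mem @LocallyOfFiniteType U.1.ι g inferInstance hg
    exact this _ _ H hg' U.2
  wlog hX : IsAffine X generalizing X
  · rw [IsZariskiLocalAtSource.iff_of_iSup_eq_top (P := @LocallyOfFinitePresentation) _
      (iSup_affineOpens_eq_top X)]
    intro U
    have H := MorphismProperty.comp_mem @LocallyOfFinitePresentation
      U.1.ι (f ≫ g) inferInstance h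
    rw [← Category.assoc] at H
    exact this _ H U.2
  rw [HasRingHomProperty.iff_of_isAffine (P := @LocallyOfFinitePresentation)] at h ⊢
  rw [HasRingHomProperty.iff_of_isAffine (P := @LocallyOfFiniteType)] at hg
  rw [Scheme.Hom.comp_appTop, CommRingCat.hom_comp] at h
  exact RingHom.FinitePresentation.of_comp_finiteType _ h hg

/-- The complement of the image of a finitely presented closed immersion into an affine
scheme is quasi-compact. -/
theorem EtaleEnvelopeAux.compl_range_isCompact {W Z : Scheme.{u}} (g : W ⟶ Z)
    [IsClosedImmersion g] (hg : LocallyOfFinitePresentation g) [IsAffine Z] :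
    IsCompact (Set.range g.base)ᶜ := by
  obtain ⟨hW, hsurj⟩ := IsClosedImmersion.isAffine_surjective_of_isAffine g
  haveI := hW
  have hfp : RingHom.FinitePresentation g.appTop.hom :=
    (HasRingHomProperty.iff_of_isAffine (P := @LocallyOfFinitePresentation)).mp hg
  obtain ⟨s, hs⟩ := EtaleEnvelopeAux.ker_fg_of_fp _ hfp hsurj
  have hrange : Set.range (Spec.map g.appTop).base =
      PrimeSpectrum.zeroLocus (RingHom.ker g.appTop.hom : Set Γ(Z, ⊤)) := by
    rw [Spec.map_base]
    exact range_comap_of_surjective (hf := hsurj)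
  have h1 : IsCompact (Set.range (Spec.map g.appTop).base)ᶜ := by
    rw [hrange, ← hs, PrimeSpectrum.zeroLocus_span]
    have hU : (PrimeSpectrum.zeroLocus (s : Set Γ(Z, ⊤)))ᶜ =
        ⋃ r ∈ s, ↑(PrimeSpectrum.basicOpen r) := by
      ext x
      simp [PrimeSpectrum.mem_zeroLocus, Set.subset_def, PrimeSpectrum.mem_basicOpen]
    have hc := s.finite_toSet.isCompact_biUnion fun r _ => PrimeSpectrum.isCompact_basicOpen r
    rw [Finset.set_biUnion_coe, ← hU] at hc
    exact hc
  let σ := TopCat.homeoOfIso (Scheme.forgetToTop.mapIso Z.isoSpec)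
  let τ := TopCat.homeoOfIso (Scheme.forgetToTop.mapIso W.isoSpec)
  have hnat : W.isoSpec.hom ≫ Spec.map g.appTop = g ≫ Z.isoSpec.hom :=
    Scheme.isoSpec_hom_naturality g
  have hστ : ∀ w : W, (Spec.map g.appTop).base (τ w) = σ (g.base w) := by
    intro w
    have hfun := congrArg (fun m : W ⟶ Spec Γ(Z, ⊤) => m.base w) hnat
    simp only [Scheme.Hom.comp_apply] at hfun
    exact hfun
  have hkey : Set.range g.base = ⇑σ ⁻¹' Set.range (Spec.map g.appTop).base := by
    ext z
    constructor
    · rintro ⟨w, rfl⟩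
      exact ⟨τ w, hστ w⟩
    · rintro ⟨p, hp⟩
      obtain ⟨w, rfl⟩ := τ.surjective p
      rw [hστ w] at hp
      exact ⟨w, σ.injective hp⟩
  have hcompl : (Set.range g.base)ᶜ = ⇑σ ⁻¹' (Set.range (Spec.map g.appTop).base)ᶜ := by
    rw [hkey, Set.preimage_compl]
  rw [hcompl]
  exact σ.isCompact_preimage.mpr h1

/-- Intersecting an affine open with the complement of the image of a finitely presented
closed immersion yields a quasi-compact set. -/
theorem EtaleEnvelopeAux.inter_compl_range_isCompact {X E : Scheme.{u}} (i : X ⟶ E)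
    [IsClosedImmersion i] (hlfp : LocallyOfFinitePresentation i) (V : E.Opens)
    (hV : IsAffineOpen V) : IsCompact ((V : Set E) ∩ (Set.range i.base)ᶜ) := by
  haveI : IsAffine V.toScheme := hV
  haveI : IsClosedImmersion (i ∣_ V) :=
    IsZariskiLocalAtTarget.restrict (P := @IsClosedImmersion) (inferInstance : IsClosedImmersion i) V
  have h2 : LocallyOfFinitePresentation (i ∣_ V) := IsZariskiLocalAtTarget.restrict hlfp V
  have hc := EtaleEnvelopeAux.compl_range_isCompact (i ∣_ V) h2
  have himg := hc.image V.ι.base.hom.continuous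
  have heq : V.ι.base '' (Set.range (i ∣_ V).base)ᶜ =
      (V : Set E) ∩ (Set.range i.base)ᶜ := by
    ext z
    constructor
    · rintro ⟨v, hv, rfl⟩
      refine ⟨v.2, ?_⟩
      rintro ⟨x, hx⟩
      apply hv
      have hxV : x ∈ i ⁻¹ᵁ V := by
        show i.base x ∈ V
        rw [hx]
        exact v.2
      refine ⟨⟨x, hxV⟩, ?_⟩
      exact Subtype.ext ((morphismRestrict_base_coe i V ⟨x, hxV⟩).trans hx)
    · rintro ⟨hzV, hz⟩
      refine ⟨⟨z, hzV⟩, ?_, rfl⟩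
      rintro ⟨x, hx⟩
      apply hz
      refine ⟨x.1, ?_⟩
      have h3 := morphismRestrict_base_coe i V x
      rw [hx] at h3
      exact h3.symm
  rw [heq] at himg
  exact himg

end Aux

/-- If `f` is of finite presentation, then its étale envelope map is of finite
presentation. -/
theorem etaleEnvelope_finitePresentation {X Y E : Scheme.{u}} (f : X ⟶ Y)
    (e : E ⟶ Y) (i : X ⟶ E) (j : Y ⟶ E) (h : IsEtaleEnvelope f E e i j)
    (hqc : QuasiCompact f) (hqs : QuasiSeparated f)
    (hlfp : LocallyOfFinitePresentation f) :
    QuasiCompact e ∧ QuasiSeparated e ∧ LocallyOfFinitePresentation e := by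
  haveI := hqc
  haveI := hqs
  haveI := hlfp
  haveI := h.closedImmersion
  haveI := h.openImmersion
  haveI he_lfp : LocallyOfFinitePresentation e := h.etale.2.2
  have he_lft : LocallyOfFiniteType e := EtaleEnvelopeAux.lft_of_lfp e
  have hi_lfp : LocallyOfFinitePresentation i := by
    refine EtaleEnvelopeAux.lfp_of_comp i e ?_ he_lft
    rw [h.i_comp]; exact hlfp
  have hcover : ∀ z : E, z ∈ Set.range i.base ∨ z ∈ Set.range j.base := by
    intro z
    by_cases hz : z ∈ Set.range j.base
    · exact Or.inr hz
    · exact Or.inl (h.range_i ▸ hz)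
  have hei : ∀ x : X, e.base (i.base x) = f.base x := by
    intro x; rw [← Scheme.Hom.comp_apply, h.i_comp]
  have hej : ∀ y : Y, e.base (j.base y) = y := by
    intro y; rw [← Scheme.Hom.comp_apply, h.j_comp]; rfl
  -- `j` is quasi-compact
  have hVj : ∀ (V : E.Opens), IsAffineOpen V →
      IsCompact ((V : Set E) ∩ Set.range j.base) := by
    intro V hV
    have := EtaleEnvelopeAux.inter_compl_range_isCompact i hi_lfp V hV
    rwa [h.range_i, compl_compl] at this
  have hQCj : QuasiCompact j := by
    rw [quasiCompact_iff_forall_isAffineOpen]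
    intro V hV
    have hemb : Topology.IsEmbedding j.base := j.isOpenEmbedding.isEmbedding
    show IsCompact (j.base ⁻¹' (V : Set E))
    have hpre : j.base ⁻¹' (V : Set E) = j.base ⁻¹' ((V : Set E) ∩ Set.range j.base) := by
      rw [Set.preimage_inter, Set.preimage_range, Set.inter_univ]
    rw [hpre]
    exact (hemb.isInducing.isCompact_preimage_iff Set.inter_subset_right).mpr (hVj V hV)
  -- `e` is quasi-separated
  have hQS : QuasiSeparated e := by
    rw [IsZariskiLocalAtTarget.iff_of_iSup_eq_top (P := @QuasiSeparated)
      (fun U : Y.affineOpens => U.1) (iSup_affineOpens_eq_top Y)]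
    intro U
    haveI : IsAffine U.1.toScheme := U.2
    rw [quasiSeparated_iff_quasiSeparatedSpace]
    have hset : IsQuasiSeparated ((e ⁻¹ᵁ U.1 : E.Opens) : Set E) := by
      intro W₁ W₂ hW₁s hW₁o hW₁c hW₂s hW₂o hW₂c
      -- part A : inside the closed part
      have hXqs : IsQuasiSeparated ((f ⁻¹ᵁ U.1 : X.Opens) : Set X) := by
        have hres : QuasiSeparatedSpace ((f ⁻¹ᵁ U.1 : X.Opens) : Set X) :=
          @HasAffineProperty.restrict _ _ EtaleEnvelopeAux.qsAff _ _ _ hqs U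
        exact (isQuasiSeparated_iff_quasiSeparatedSpace _ (f ⁻¹ᵁ U.1).2).mpr hres
      have hsubA₁ : i.base ⁻¹' W₁ ⊆ ((f ⁻¹ᵁ U.1 : X.Opens) : Set X) := by
        intro x hx
        have := hW₁s hx
        show f.base x ∈ (U.1 : Set Y)
        rw [← hei x]
        exact this
      have hsubA₂ : i.base ⁻¹' W₂ ⊆ ((f ⁻¹ᵁ U.1 : X.Opens) : Set X) := by
        intro x hx
        have := hW₂s hx
        show f.base x ∈ (U.1 : Set Y)
        rw [← hei x]
        exact this
      have hiW₁ : IsCompact (i.base ⁻¹' W₁) :=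
        (IsClosedImmersion.base_closed (f := i)).isCompact_preimage hW₁c
      have hiW₂ : IsCompact (i.base ⁻¹' W₂) :=
        (IsClosedImmersion.base_closed (f := i)).isCompact_preimage hW₂c
      have hA : IsCompact (i.base ⁻¹' W₁ ∩ i.base ⁻¹' W₂) :=
        hXqs _ _ hsubA₁ (hW₁o.preimage i.base.hom.continuous) hiW₁
          hsubA₂ (hW₂o.preimage i.base.hom.continuous) hiW₂
      have hA' : IsCompact (W₁ ∩ W₂ ∩ Set.range i.base) := by
        have := hA.image i.base.hom.continuous
        rwa [← Set.preimage_inter, Set.image_preimage_eq_inter_range] at this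
      -- part B : inside the open part
      have hsubB₁ : j.base ⁻¹' W₁ ⊆ (U.1 : Set Y) := by
        intro y hy
        have := hW₁s hy
        have h2 : e.base (j.base y) ∈ (U.1 : Set Y) := this
        rwa [hej y] at h2
      have hsubB₂ : j.base ⁻¹' W₂ ⊆ (U.1 : Set Y) := by
        intro y hy
        have := hW₂s hy
        have h2 : e.base (j.base y) ∈ (U.1 : Set Y) := this
        rwa [hej y] at h2
      have hjW₁ : IsCompact (j.base ⁻¹' W₁) := hQCj.isCompact_preimage _ hW₁o hW₁c
      have hjW₂ : IsCompact (j.base ⁻¹' W₂) := hQCj.isCompact_preimage _ hW₂o hW₂c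
      have hB : IsCompact (j.base ⁻¹' W₁ ∩ j.base ⁻¹' W₂) :=
        U.2.isQuasiSeparated _ _ hsubB₁ (hW₁o.preimage j.base.hom.continuous) hjW₁
          hsubB₂ (hW₂o.preimage j.base.hom.continuous) hjW₂
      have hB' : IsCompact (W₁ ∩ W₂ ∩ Set.range j.base) := by
        have := hB.image j.base.hom.continuous
        rwa [← Set.preimage_inter, Set.image_preimage_eq_inter_range] at this
      have hdecomp : W₁ ∩ W₂ =
          (W₁ ∩ W₂ ∩ Set.range i.base) ∪ (W₁ ∩ W₂ ∩ Set.range j.base) := by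
        ext z
        constructor
        · intro hz
          rcases hcover z with hc | hc
          · exact Or.inl ⟨hz, hc⟩
          · exact Or.inr ⟨hz, hc⟩
        · rintro (⟨hz, _⟩ | ⟨hz, _⟩) <;> exact hz
      rw [hdecomp]
      exact hA'.union hB'
    exact (isQuasiSeparated_iff_quasiSeparatedSpace _ (e ⁻¹ᵁ U.1).2).mp hset
  -- `e` is quasi-compact
  have hQC : QuasiCompact e := by
    constructor
    intro U hUo hUc
    have heq : e.base ⁻¹' U = i.base '' (f.base ⁻¹' U) ∪ j.base '' U := by
      ext z
      constructor
      · intro hz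
        rcases hcover z with ⟨x, rfl⟩ | ⟨y, rfl⟩
        · exact Or.inl ⟨x, by simpa [hei x] using hz, rfl⟩
        · exact Or.inr ⟨y, by simpa [hej y] using hz, rfl⟩
      · rintro (⟨x, hx, rfl⟩ | ⟨y, hy, rfl⟩)
        · show e.base (i.base x) ∈ U
          rw [hei x]; exact hx
        · show e.base (j.base y) ∈ U
          rw [hej y]; exact hy
    rw [heq]
    exact ((hqc.isCompact_preimage _ hUo hUc).image i.base.hom.continuous).union
      (hUc.image j.base.hom.continuous)
  exact ⟨hQC, hQS, he_lfp⟩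
end

section
/- Let f : X ⟶ Y be a morphism of schemes with étale envelope triple (E, e, i, j). If e : E ⟶ Y is quasi-separated, then the open immersion j is quasi-compact, and consequently Set.range i.base is a constructible subset of the underlying topological space of E. -/
open AlgebraicGeometry CategoryTheory CategoryTheory.Limits

universe u

/-- A subset of a topological space is a retrocompact open if it is open and its intersection
with every quasi-compact open subset is quasi-compact. -/
def IsRetrocompactOpen {α : Type u} [TopologicalSpace α] (U : Set α) : Prop :=
  IsOpen U ∧ ∀ V : Set α, IsOpen V → IsCompact V → IsCompact (U ∩ V)

/-- A subset of a topological space is constructible if it belongs to the Boolean algebra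
generated by the retrocompact open subsets. -/
inductive IsConstructibleSet {α : Type u} [TopologicalSpace α] : Set α → Prop
  | retrocompact (U : Set α) (hU : IsRetrocompactOpen U) : IsConstructibleSet U
  | empty : IsConstructibleSet ∅
  | compl (s : Set α) : IsConstructibleSet s → IsConstructibleSet sᶜ
  | union (s t : Set α) :
      IsConstructibleSet s → IsConstructibleSet t → IsConstructibleSet (s ∪ t)

instance : MorphismProperty.IsMultiplicative (C := Scheme.{u}) @QuasiCompact where
  id_mem _ := inferInstance

/-- If the étale envelope map `e` is quasi-separated, then `j` is quasi-compact and the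
range of `i` is constructible. -/
theorem etaleEnvelope_quasiSeparated_consequences {X Y E : Scheme.{u}} (f : X ⟶ Y)
    (e : E ⟶ Y) (i : X ⟶ E) (j : Y ⟶ E) (h : IsEtaleEnvelope f E e i j)
    (hqs : QuasiSeparated e) :
    QuasiCompact j ∧ IsConstructibleSet (Set.range i.base) := by
  have hj : QuasiCompact j := by
    have hpc : MorphismProperty.HasOfPostcompProperty @QuasiCompact @QuasiSeparated := by
      exact inferInstance
    exact MorphismProperty.of_postcomp (W := @QuasiCompact) j e hqs
      (by rw [h.j_comp]; infer_instance)
  refine ⟨hj, ?_⟩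
  rw [h.range_i]
  apply IsConstructibleSet.compl
  apply IsConstructibleSet.retrocompact
  constructor
  · exact h.openImmersion.base_open.isOpen_range
  · intro V hV hVc
    have hpre : IsCompact (j.base ⁻¹' V) := hj.isCompact_preimage V hV hVc
    have : Set.range j.base ∩ V = j.base '' (j.base ⁻¹' V) := by
      rw [Set.image_preimage_eq_inter_range, Set.inter_comm]
    rw [this]
    exact hpre.image j.base.hom.continuous
end
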